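/- If the square X × X (with the product topology) satisfies Sfin(Γ,Τ), then X satisfies Ufin(O,Γ). -/

import Mathlib

open Set Filter Cardinal
open scoped Classical

noncomputable section

/-- The Cantor space `2^ℕ`. -/
abbrev Cantor := ℕ → Bool

/-- Arrays: elements of `2^(ℕ×ℕ)`. -/
abbrev Arr := ℕ × ℕ → Bool

/-- A γ-array: every row is eventually 1. -/
def IsGammaArray (A : Arr) : Prop := ∀ n, ∀ᶠ m in atTop, A (n, m) = true

/-- A γ-family: a set of γ-arrays. -/
def GammaFamily (𝒜 : Set Arr) : Prop := ∀ A ∈ 𝒜, IsGammaArray A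

/-- A family of arrays is finitely τ-diagonalizable. -/
def FinTauDiag (𝒜 : Set Arr) : Prop :=
  ∃ F : ℕ → Finset ℕ,
    (∀ A ∈ 𝒜, ∃ᶠ n in atTop, ∃ m ∈ F n, A (n, m) = true) ∧
    (∀ A ∈ 𝒜, ∀ B ∈ 𝒜,
      (∀ᶠ n in atTop, ∀ m ∈ F n, A (n, m) ≤ B (n, m)) ∨
      (∀ᶠ n in atTop, ∀ m ∈ F n, B (n, m) ≤ A (n, m)))

/-- A family of arrays is semi τ-diagonalizable (via a partial function with domain `D`). -/
def SemiTauDiag (𝒜 : Set Arr) : Prop :=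
  ∃ (D : Set ℕ) (g : ℕ → ℕ),
    (∀ A ∈ 𝒜, ∃ᶠ n in atTop, n ∈ D ∧ A (n, g n) = true) ∧
    (∀ A ∈ 𝒜, ∀ B ∈ 𝒜,
      (∀ᶠ n in atTop, n ∈ D → A (n, g n) ≤ B (n, g n)) ∨
      (∀ᶠ n in atTop, n ∈ D → B (n, g n) ≤ A (n, g n)))

/-- A τ-family of arrays. -/
def TauFamily (𝒜 : Set Arr) : Prop :=
  (∀ A ∈ 𝒜, ∀ n, ∃ᶠ m in atTop, A (n, m) = true) ∧
  (∀ A ∈ 𝒜, ∀ B ∈ 𝒜, ∀ n,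
    (∀ᶠ m in atTop, A (n, m) ≤ B (n, m)) ∨
    (∀ᶠ m in atTop, B (n, m) ≤ A (n, m)))

/-- A family of arrays is τ-diagonalizable. -/
def TauDiag (𝒜 : Set Arr) : Prop :=
  ∃ g : ℕ → ℕ,
    (∀ A ∈ 𝒜, ∃ᶠ n in atTop, A (n, g n) = true) ∧
    (∀ A ∈ 𝒜, ∀ B ∈ 𝒜,
      (∀ᶠ n in atTop, A (n, g n) ≤ B (n, g n)) ∨
      (∀ᶠ n in atTop, B (n, g n) ≤ A (n, g n)))

/-- A family of arrays is o-diagonalizable. -/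
def ODiag (𝒜 : Set Arr) : Prop :=
  ∃ g : ℕ → ℕ, ∀ A ∈ 𝒜, ∃ n, A (n, g n) = true

/-- An ω-family of arrays: rows frequently 1 and, for each `n`,
the family of the `n`-th rows is centered. -/
def OmegaFamily (𝒜 : Set Arr) : Prop :=
  (∀ A ∈ 𝒜, ∀ n, ∃ᶠ m in atTop, A (n, m) = true) ∧
  (∀ n, ∀ 𝒜' ⊆ 𝒜, 𝒜'.Finite → {m | ∀ A ∈ 𝒜', A (n, m) = true}.Infinite)

/-- The bounding number 𝔟. -/
def bNum : Cardinal :=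
  sInf {c | ∃ F : Set (ℕ → ℕ), Cardinal.mk F = c ∧
    ¬ ∃ g : ℕ → ℕ, ∀ f ∈ F, ∀ᶠ n in atTop, f n ≤ g n}

/-- The splitting number 𝔰. -/
def sNum : Cardinal :=
  sInf {c | ∃ S : Set (Set ℕ), Cardinal.mk S = c ∧ (∀ s ∈ S, s.Infinite) ∧
    ∀ a : Set ℕ, a.Infinite → ∃ s ∈ S, (a ∩ s).Infinite ∧ (a \ s).Infinite}

/-- The tower number 𝔱. -/
def tNum : Cardinal :=
  sInf {c | ∃ T : Set (Set ℕ), Cardinal.mk T = c ∧ (∀ t ∈ T, t.Infinite) ∧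
    (∀ a ∈ T, ∀ b ∈ T, (a \ b).Finite ∨ (b \ a).Finite) ∧
    ¬ ∃ a : Set ℕ, a.Infinite ∧ ∀ t ∈ T, (a \ t).Finite}

/-- cov(M): the least number of meager sets covering the Baire space. -/
def covM : Cardinal :=
  sInf {c | ∃ 𝒞 : Set (Set (ℕ → ℕ)), Cardinal.mk 𝒞 = c ∧
    (∀ M ∈ 𝒞, IsMeagre M) ∧ ⋃₀ 𝒞 = Set.univ}

/-- The o-diagonalization number: the minimal cardinality of a τ-family
which is not o-diagonalizable. -/
def odNum : Cardinal :=
  sInf {c | ∃ 𝒜 : Set Arr, Cardinal.mk 𝒜 = c ∧ TauFamily 𝒜 ∧ ¬ ODiag 𝒜}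

section Covers

variable (α : Type*)

/-- A countable cover of the space `α`. -/
def CountCover (𝒰 : Set (Set α)) : Prop :=
  𝒰.Countable ∧ ⋃₀ 𝒰 = Set.univ ∧ Set.univ ∉ 𝒰

/-- A (countable) γ-cover. -/
def GammaCover (𝒰 : Set (Set α)) : Prop :=
  CountCover α 𝒰 ∧ 𝒰.Infinite ∧ ∀ x : α, {U | U ∈ 𝒰 ∧ x ∉ U}.Finite

/-- A (countable) τ-cover. -/
def TauCover (𝒰 : Set (Set α)) : Prop :=
  CountCover α 𝒰 ∧ (∀ x : α, {U | U ∈ 𝒰 ∧ x ∈ U}.Infinite) ∧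
  ∀ x y : α, {U | U ∈ 𝒰 ∧ x ∈ U ∧ y ∉ U}.Finite ∨ {U | U ∈ 𝒰 ∧ y ∈ U ∧ x ∉ U}.Finite

/-- A (countable) ω-cover. -/
def OmegaCover (𝒰 : Set (Set α)) : Prop :=
  CountCover α 𝒰 ∧ ∀ F : Set α, F.Finite → ∃ U ∈ 𝒰, F ⊆ U

variable [TopologicalSpace α]

/-- All members are open. -/
def OpenFam (𝒰 : Set (Set α)) : Prop := ∀ U ∈ 𝒰, IsOpen U

/-- All members are clopen. -/
def ClopenFam (𝒰 : Set (Set α)) : Prop := ∀ U ∈ 𝒰, IsClopen U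

/-- The class O of countable open covers. -/
def OCov (𝒰 : Set (Set α)) : Prop := CountCover α 𝒰 ∧ OpenFam α 𝒰
/-- The class Γ of countable open γ-covers. -/
def OGamma (𝒰 : Set (Set α)) : Prop := GammaCover α 𝒰 ∧ OpenFam α 𝒰
/-- The class Τ of countable open τ-covers. -/
def OTau (𝒰 : Set (Set α)) : Prop := TauCover α 𝒰 ∧ OpenFam α 𝒰
/-- The class Ω of countable open ω-covers. -/
def OOmega (𝒰 : Set (Set α)) : Prop := OmegaCover α 𝒰 ∧ OpenFam α 𝒰

/-- The class C of countable clopen covers. -/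
def KCov (𝒰 : Set (Set α)) : Prop := CountCover α 𝒰 ∧ ClopenFam α 𝒰
/-- The class C_Γ of countable clopen γ-covers. -/
def KGamma (𝒰 : Set (Set α)) : Prop := GammaCover α 𝒰 ∧ ClopenFam α 𝒰
/-- The class C_Τ of countable clopen τ-covers. -/
def KTau (𝒰 : Set (Set α)) : Prop := TauCover α 𝒰 ∧ ClopenFam α 𝒰

end Covers

/-- The selection principle S1(𝒜,ℬ). -/
def S1 (α : Type*) (𝒜 ℬ : Set (Set α) → Prop) : Prop :=
  ∀ U : ℕ → Set (Set α), (∀ n, 𝒜 (U n)) →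
    ∃ V : ℕ → Set α, (∀ n, V n ∈ U n) ∧ ℬ (range V)

/-- The selection principle Sfin(𝒜,ℬ). -/
def SFin (α : Type*) (𝒜 ℬ : Set (Set α) → Prop) : Prop :=
  ∀ U : ℕ → Set (Set α), (∀ n, 𝒜 (U n)) →
    ∃ F : ℕ → Set (Set α), (∀ n, (F n).Finite ∧ F n ⊆ U n) ∧ ℬ (⋃ n, F n)

/-- The selection principle Ufin(𝒜,ℬ). -/
def UFin (α : Type*) (𝒜 ℬ : Set (Set α) → Prop) : Prop :=
  ∀ U : ℕ → Set (Set α), (∀ n, 𝒜 (U n)) →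
    (∀ n, ¬ ∃ F : Set (Set α), F ⊆ U n ∧ F.Finite ∧ ⋃₀ F = Set.univ) →
    ∃ F : ℕ → Set (Set α), (∀ n, (F n).Finite ∧ F n ⊆ U n) ∧
      ℬ (range fun n => ⋃₀ F n)

/-- The critical cardinality non(P) of a property `P` of sets of reals:
the minimal cardinality of an infinite subset of the Cantor space not satisfying `P`. -/
def nonP (P : Set Cantor → Prop) : Cardinal :=
  sInf {c | ∃ X : Set Cantor, X.Infinite ∧ ¬ P X ∧ Cardinal.mk X = c}

/-- The collection of cardinalities of witnessing families of `f`-sequences for `θ_f`. -/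
def ThetaSet (f : ℕ → ℕ) : Set Cardinal :=
  {c | ∃ ℱ : Set (ℕ → Set ℕ), Cardinal.mk ℱ = c ∧
    (∀ σ ∈ ℱ, ∀ n, σ n ⊆ Iio (f n)) ∧
    (∀ σ ∈ ℱ, ∀ᶠ n in atTop, (σ n).Nonempty) ∧
    (∀ σ ∈ ℱ, ∀ η ∈ ℱ, (∀ᶠ n in atTop, σ n ⊆ η n) ∨ (∀ᶠ n in atTop, η n ⊆ σ n)) ∧
    ¬ ∃ g : ℕ → ℕ, ∀ σ ∈ ℱ, ∃ n, g n ∈ σ n}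

/-- The cardinal θ_f; equal to 𝔠⁺ if no witnessing family exists. -/
def theta (f : ℕ → ℕ) : Cardinal :=
  if (ThetaSet f).Nonempty then sInf (ThetaSet f) else Order.succ Cardinal.continuum

/-- θ* = min over f (with all values ≥ 2) of θ_f. -/
def thetaStar : Cardinal :=
  sInf {c | ∃ f : ℕ → ℕ, (∀ n, 2 ≤ f n) ∧ theta f = c}

/-- The collection of cardinalities of witnessing families for `𝔈_f`. -/
def ESet (f : ℕ → ℕ) : Set Cardinal :=
  {c | ∃ F : Set (ℕ → ℕ), Cardinal.mk F = c ∧ (∀ h ∈ F, ∀ n, h n < f n) ∧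
    ∀ g : ℕ → ℕ, ∃ h ∈ F, ∀ n, h n ≠ g n}

/-- The cardinal 𝔈_f; equal to 𝔠⁺ if no witnessing family exists. -/
def ENum (f : ℕ → ℕ) : Cardinal :=
  if (ESet f).Nonempty then sInf (ESet f) else Order.succ Cardinal.continuum

/-- 𝔈* = min over f (with all values ≥ 1) of 𝔈_f. -/
def EStar : Cardinal :=
  sInf {c | ∃ f : ℕ → ℕ, (∀ n, 1 ≤ f n) ∧ ENum f = c}


/-- Cylinder (basic clopen) subsets of the Cantor space. -/
def Cyl (e : Finset (ℕ × Bool)) : Set Cantor := {f | ∀ q ∈ e, f q.1 = q.2}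

lemma isClopen_Cyl (e : Finset (ℕ × Bool)) : IsClopen (Cyl e) := by
  have hE : Cyl e = ⋂ q ∈ e, {f : Cantor | f q.1 = q.2} := by
    ext f; simp [Cyl]
  rw [hE]
  refine isClopen_biInter_finset fun q _ => ?_
  have : {f : Cantor | f q.1 = q.2} = (fun f : Cantor => f q.1) ⁻¹' {q.2} := rfl
  rw [this]
  exact (isClopen_discrete _).preimage (continuous_apply q.1)

lemma exists_cyl {O : Set Cantor} (hO : IsOpen O) {f : Cantor} (hf : f ∈ O) :
    ∃ e : Finset (ℕ × Bool), f ∈ Cyl e ∧ Cyl e ⊆ O := by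
  obtain ⟨I, u, hu, hsub⟩ := isOpen_pi_iff.mp hO f hf
  refine ⟨I.image fun i => (i, f i), ?_, ?_⟩
  · intro q hq
    simp only [Finset.mem_image] at hq
    obtain ⟨i, _, rfl⟩ := hq
    rfl
  · intro g hg
    refine hsub (fun i hi => ?_)
    have hgi : g i = f i :=
      hg (i, f i) (Finset.mem_image_of_mem _ (Finset.mem_coe.mp hi))
    rw [hgi]
    exact (hu i (Finset.mem_coe.mp hi)).2

/-- If `X × X` satisfies Sfin(Γ,Τ), then `X` satisfies Ufin(O,Γ). -/
theorem stmt4 (X : Set Cantor) (hX : X.Infinite)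
    (h : SFin (↥X × ↥X) (OGamma (↥X × ↥X)) (OTau (↥X × ↥X))) :
    UFin ↥X (OCov ↥X) (OGamma ↥X) := by
  intro U hU hnfs
  obtain ⟨y0v, hy0v⟩ := hX.nonempty
  set y₀ : ↥X := ⟨y0v, hy0v⟩ with hy₀def
  -- enumerate the covers
  have hUne : ∀ n, (U n).Nonempty := by
    intro n
    have : y₀ ∈ ⋃₀ U n := by rw [(hU n).1.2.1]; trivial
    obtain ⟨W, hW, _⟩ := this
    exact ⟨W, hW⟩
  choose u hu using fun n => ((hU n).1.1).exists_eq_range (hUne n)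
  have humem : ∀ n j, u n j ∈ U n := fun n j => by rw [hu n]; exact ⟨j, rfl⟩
  have huopen : ∀ n j, IsOpen (u n j) := fun n j => (hU n).2 _ (humem n j)
  -- basic clopen refinement
  have hbasic : ∀ n (x : ↥X), ∃ (e : Finset (ℕ × Bool)) (j : ℕ),
      x ∈ (Subtype.val ⁻¹' Cyl e : Set ↥X) ∧ (Subtype.val ⁻¹' Cyl e : Set ↥X) ⊆ u n j := by
    intro n x
    have hx : x ∈ ⋃₀ U n := by rw [(hU n).1.2.1]; trivial
    obtain ⟨W, hW, hxW⟩ := hx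
    rw [hu n] at hW
    obtain ⟨j, rfl⟩ := hW
    obtain ⟨O, hO, hOW⟩ := isOpen_induced_iff.mp (huopen n j)
    have hxO : (x : Cantor) ∈ O := by
      rw [← hOW] at hxW; exact hxW
    obtain ⟨e, hfe, heO⟩ := exists_cyl hO hxO
    refine ⟨e, j, hfe, ?_⟩
    rw [← hOW]
    exact fun z hz => heO hz
  choose en jn hen hjn using fun n => hbasic n y₀
  -- the clopen increasing approximations
  set Sc : ℕ → ℕ → Set (Finset (ℕ × Bool) × ℕ) := fun n m =>
    {c | (Subtype.val ⁻¹' Cyl c.1 : Set ↥X) ⊆ u n c.2 ∧ Encodable.encode c ≤ m} with hSc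
  set V : ℕ → ℕ → Set ↥X := fun n m =>
    (Subtype.val ⁻¹' Cyl (en n)) ∪ ⋃ c ∈ Sc n m, (Subtype.val ⁻¹' Cyl c.1) with hV
  set Gf : ℕ → ℕ → Set (Set ↥X) := fun n m =>
    insert (u n (jn n)) ((fun c : Finset (ℕ × Bool) × ℕ => u n c.2) '' Sc n m) with hGf
  have hScFin : ∀ n m, (Sc n m).Finite := by
    intro n m
    apply Set.Finite.subset
      ((Set.finite_Iic m).preimage
        (Function.Injective.injOn (Encodable.encode_injective
          (α := Finset (ℕ × Bool) × ℕ))))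
    intro c hc
    exact hc.2
  have hVmono : ∀ n {m m'}, m ≤ m' → V n m ⊆ V n m' := by
    intro n m m' hle x hx
    rcases hx with hx | hx
    · exact Or.inl hx
    · refine Or.inr ?_
      simp only [Set.mem_iUnion, exists_prop] at hx ⊢
      obtain ⟨c, hc, hxc⟩ := hx
      exact ⟨c, ⟨hc.1, hc.2.trans hle⟩, hxc⟩
  have hVy0 : ∀ n m, y₀ ∈ V n m := fun n m => Or.inl (hen n)
  have hVcover : ∀ (x : ↥X) n, ∃ m, x ∈ V n m := by
    intro x n
    obtain ⟨e, j, hxe, hej⟩ := hbasic n x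
    refine ⟨Encodable.encode ((e, j) : Finset (ℕ × Bool) × ℕ), Or.inr ?_⟩
    simp only [Set.mem_iUnion, exists_prop]
    exact ⟨(e, j), ⟨hej, le_refl _⟩, hxe⟩
  have hVsub : ∀ n m, V n m ⊆ ⋃₀ Gf n m := by
    intro n m x hx
    rcases hx with hx | hx
    · exact ⟨u n (jn n), Set.mem_insert _ _, hjn n hx⟩
    · simp only [Set.mem_iUnion, exists_prop] at hx
      obtain ⟨c, hc, hxc⟩ := hx
      exact ⟨u n c.2, Set.mem_insert_of_mem _ ⟨c, hc, rfl⟩, hc.1 hxc⟩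
  have hGfFin : ∀ n m, (Gf n m).Finite := fun n m => ((hScFin n m).image _).insert _
  have hGfsub : ∀ n m, Gf n m ⊆ U n := by
    intro n m S hS
    rcases hS with rfl | ⟨c, _, rfl⟩
    · exact humem n (jn n)
    · exact humem n c.2
  have hGfne : ∀ n m, ⋃₀ Gf n m ≠ Set.univ := by
    intro n m hcontra
    exact hnfs n ⟨Gf n m, hGfsub n m, hGfFin n m, hcontra⟩
  have hVproper : ∀ n m, ∃ x : ↥X, x ∉ V n m := by
    intro n m
    obtain ⟨x, hx⟩ := (Set.ne_univ_iff_exists_notMem _).mp (hGfne n m)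
    exact ⟨x, fun hc => hx (hVsub n m hc)⟩
  have hVclopen : ∀ n m, IsClopen (V n m) := by
    intro n m
    refine IsClopen.union ((isClopen_Cyl (en n)).preimage continuous_subtype_val) ?_
    exact (hScFin n m).isClopen_biUnion
      fun c _ => (isClopen_Cyl c.1).preimage continuous_subtype_val
  -- the γ-covers of the square
  set W2 : ℕ → ℕ → Set (↥X × ↥X) := fun n m => {p | p.1 ∈ V n m ∨ p.2 ∉ V n m} with hW2
  set 𝒲 : ℕ → Set (Set (↥X × ↥X)) := fun n => Set.range (W2 n) with h𝒲
  have hW2open : ∀ n m, IsOpen (W2 n m) := by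
    intro n m
    have : W2 n m = (Prod.fst ⁻¹' V n m) ∪ (Prod.snd ⁻¹' (V n m)ᶜ) := rfl
    rw [this]
    exact ((hVclopen n m).isOpen.preimage continuous_fst).union
      (((hVclopen n m).compl.isOpen).preimage continuous_snd)
  have hW2ne : ∀ n m, W2 n m ≠ Set.univ := by
    intro n m hc
    obtain ⟨x, hx⟩ := hVproper n m
    have hmem : (x, y₀) ∈ W2 n m := by rw [hc]; trivial
    rcases hmem with h1 | h2
    exacts [hx h1, h2 (hVy0 n m)]
  have hOG : ∀ n, OGamma (↥X × ↥X) (𝒲 n) := by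
    intro n
    have hmiss : ∀ p : ↥X × ↥X, {W | W ∈ 𝒲 n ∧ p ∉ W}.Finite := by
      intro p
      obtain ⟨ma, hma⟩ := hVcover p.1 n
      have hsub : {W | W ∈ 𝒲 n ∧ p ∉ W} ⊆ (W2 n) '' (Set.Iio ma) := by
        rintro W ⟨⟨m, rfl⟩, hpW⟩
        refine ⟨m, ?_, rfl⟩
        by_contra hlt
        simp only [Set.mem_Iio, not_lt] at hlt
        exact hpW (Or.inl (hVmono n hlt hma))
      exact ((Set.finite_Iio ma).image _).subset hsub
    have hVrange_inf : (Set.range (V n)).Infinite := by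
      intro hfin
      have hsub : (Set.univ : Set ℕ) ⊆ ⋃ S ∈ Set.range (V n), {m | V n m = S} :=
        fun m _ => Set.mem_biUnion ⟨m, rfl⟩ rfl
      have hfib : ∃ S ∈ Set.range (V n), {m | V n m = S}.Infinite := by
        by_contra hcon
        push_neg at hcon
        exact Set.infinite_univ
          (((hfin.biUnion fun S hS => (hcon S hS)).subset hsub))
      obtain ⟨S, hSmem, hSinf⟩ := hfib
      have hSuniv : ∀ x : ↥X, x ∈ S := by
        intro x
        obtain ⟨m, hm⟩ := hVcover x n
        have hup : ∃ m' ∈ {m' | V n m' = S}, m ≤ m' := by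
          by_contra hcon
          push_neg at hcon
          exact hSinf ((Set.finite_Iio m).subset fun m' hm' => hcon m' hm')
        obtain ⟨m', hm', hle⟩ := hup
        rw [← hm']
        exact hVmono n hle hm
      obtain ⟨m₀, rfl⟩ := hSmem
      obtain ⟨x, hx⟩ := hVproper n m₀
      exact hx (hSuniv x)
    have hinj : Set.InjOn (fun S : Set ↥X => {p : ↥X × ↥X | p.1 ∈ S ∨ p.2 ∉ S})
        (Set.range (V n)) := by
      rintro S ⟨m, rfl⟩ S' ⟨m', rfl⟩ hSS0
      have hSS' : {p : ↥X × ↥X | p.1 ∈ V n m ∨ p.2 ∉ V n m}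
          = {p : ↥X × ↥X | p.1 ∈ V n m' ∨ p.2 ∉ V n m'} := hSS0
      ext x
      constructor
      · intro hx
        have hmem : (x, y₀) ∈ {p : ↥X × ↥X | p.1 ∈ V n m ∨ p.2 ∉ V n m} := Or.inl hx
        rw [hSS'] at hmem
        rcases hmem with h1 | h2
        exacts [h1, absurd (hVy0 n m') h2]
      · intro hx
        have hmem : (x, y₀) ∈ {p : ↥X × ↥X | p.1 ∈ V n m' ∨ p.2 ∉ V n m'} := Or.inl hx
        rw [← hSS'] at hmem
        rcases hmem with h1 | h2
        exacts [h1, absurd (hVy0 n m) h2]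
    have h𝒲eq : 𝒲 n
        = (fun S : Set ↥X => {p : ↥X × ↥X | p.1 ∈ S ∨ p.2 ∉ S}) '' Set.range (V n) := by
      rw [← Set.range_comp]
      rfl
    constructor
    · refine ⟨⟨Set.countable_range _, ?_, ?_⟩, ?_, hmiss⟩
      · apply Set.eq_univ_of_forall
        intro p
        obtain ⟨m, hm⟩ := hVcover p.1 n
        exact ⟨W2 n m, ⟨m, rfl⟩, Or.inl hm⟩
      · rintro ⟨m, hm⟩
        exact hW2ne n m hm
      · rw [h𝒲eq]
        exact hVrange_inf.image hinj
    · rintro W ⟨m, rfl⟩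
      exact hW2open n m
  -- apply the Sfin(Γ,Τ) hypothesis
  obtain ⟨F, hFfs, hFτ⟩ := h 𝒲 hOG
  set Wbig : Set (Set (↥X × ↥X)) := ⋃ n, F n with hWbig
  obtain ⟨⟨hτcc, hτmem, hτdich⟩, hτopen⟩ := hFτ
  have hrep : ∀ W ∈ Wbig, ∃ n m, W = W2 n m := by
    intro W hW
    obtain ⟨n, hn⟩ := Set.mem_iUnion.mp hW
    obtain ⟨m, hm⟩ := (hFfs n).2 hn
    exact ⟨n, m, hm.symm⟩
  have hkey : ∀ W ∈ Wbig, ∀ a b : ↥X, ((a, b) ∈ W ↔ ((a, y₀) ∈ W ∨ (b, y₀) ∉ W)) := by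
    intro W hW a b
    obtain ⟨n, m, rfl⟩ := hrep W hW
    constructor
    · rintro (h1 | h2)
      · exact Or.inl (Or.inl h1)
      · refine Or.inr ?_
        rintro (h3 | h4)
        exacts [h2 h3, h4 (hVy0 n m)]
    · rintro (h1 | h2)
      · rcases h1 with h3 | h4
        exacts [Or.inl h3, absurd (hVy0 n m) h4]
      · exact Or.inr fun hb => h2 (Or.inl hb)
  -- the core combinatorial dichotomy
  have hP : ∃ P : Set (Set (↥X × ↥X)), P ⊆ Wbig ∧ P.Infinite ∧
      ∀ x : ↥X, {W | W ∈ P ∧ (x, y₀) ∉ W}.Finite := by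
    by_cases hc : ∃ xs : ↥X, ∀ y : ↥X,
        {W | W ∈ Wbig ∧ ((xs, y₀) ∈ W ∧ (y, y₀) ∉ W)}.Finite
    · obtain ⟨xs, hxs⟩ := hc
      refine ⟨{W | W ∈ Wbig ∧ (xs, y₀) ∈ W}, fun W hW => hW.1, hτmem (xs, y₀), ?_⟩
      intro y
      have hEq : {W | W ∈ {W | W ∈ Wbig ∧ (xs, y₀) ∈ W} ∧ (y, y₀) ∉ W}
          = {W | W ∈ Wbig ∧ ((xs, y₀) ∈ W ∧ (y, y₀) ∉ W)} := by
        ext W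
        constructor
        · rintro ⟨⟨h1, h2⟩, h3⟩; exact ⟨h1, h2, h3⟩
        · rintro ⟨h1, h2, h3⟩; exact ⟨⟨h1, h2⟩, h3⟩
      rw [hEq]
      exact hxs y
    · push_neg at hc
      refine ⟨Wbig, fun W hW => hW, (hτmem (y₀, y₀)).mono (fun W hW => hW.1), ?_⟩
      intro w
      obtain ⟨y, hy⟩ := hc w
      rcases hτdich (y, w) (w, y₀) with hA | hB
      · refine hA.subset ?_
        rintro W ⟨hW1, hW2⟩
        exact ⟨hW1, (hkey W hW1 y w).mpr (Or.inr hW2), hW2⟩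
      · exfalso
        apply hy
        refine hB.subset ?_
        rintro W ⟨hW1, hW2, hW3⟩
        refine ⟨hW1, hW2, ?_⟩
        intro hyw
        rcases (hkey W hW1 y w).mp hyw with h1 | h2
        exacts [hW3 h1, h2 hW2]
  obtain ⟨P, hPsub, hPinf, hPγ⟩ := hP
  -- choose a stage for each member of P, injectively
  have hcanon0 : ∀ W : Set (↥X × ↥X), ∃ n, (W ∈ Wbig → W ∈ F n) := by
    intro W
    by_cases hW : W ∈ Wbig
    · obtain ⟨n, hn⟩ := Set.mem_iUnion.mp hW
      exact ⟨n, fun _ => hn⟩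
    · exact ⟨0, fun hcon => absurd hcon hW⟩
  choose canon hcanon using hcanon0
  set Ns : Set ℕ := canon '' P with hNs
  have hNsinf : Ns.Infinite := by
    intro hfin
    apply hPinf
    have hsub : P ⊆ ⋃ n ∈ Ns, F n := fun W hW =>
      Set.mem_biUnion ⟨W, hW, rfl⟩ (hcanon W (hPsub hW))
    exact (hfin.biUnion fun n _ => (hFfs n).1).subset hsub
  have hWsel0 : ∀ n : ℕ, ∃ W : Set (↥X × ↥X), n ∈ Ns → (W ∈ P ∧ canon W = n) := by
    intro n
    by_cases hn : n ∈ Ns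
    · obtain ⟨W, hWP, hWn⟩ := hn
      exact ⟨W, fun _ => ⟨hWP, hWn⟩⟩
    · exact ⟨∅, fun hcon => absurd hcon hn⟩
  choose Wsel hWsel using hWsel0
  have hmsel0 : ∀ n : ℕ, ∃ m : ℕ, n ∈ Ns → Wsel n = W2 n m := by
    intro n
    by_cases hn : n ∈ Ns
    · have hWP := (hWsel n hn).1
      have hWF : Wsel n ∈ F (canon (Wsel n)) := hcanon _ (hPsub hWP)
      rw [(hWsel n hn).2] at hWF
      obtain ⟨m, hm⟩ := (hFfs n).2 hWF
      exact ⟨m, fun _ => hm.symm⟩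
    · exact ⟨0, fun hcon => absurd hcon hn⟩
  choose msel hmsel using hmsel0
  have hWselinj : Set.InjOn Wsel Ns := by
    intro n hn n' hn' heq
    rw [← (hWsel n hn).2, ← (hWsel n' hn').2, heq]
  -- for each x, the set of bad stages is finite
  have hJ : ∀ x : ↥X, {n | n ∈ Ns ∧ x ∉ V n (msel n)}.Finite := by
    intro x
    have himg : (Wsel '' {n | n ∈ Ns ∧ x ∉ V n (msel n)}).Finite := by
      apply (hPγ x).subset
      rintro W ⟨n, ⟨hn, hx⟩, rfl⟩
      refine ⟨(hWsel n hn).1, ?_⟩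
      rw [hmsel n hn]
      rintro (h1 | h2)
      exacts [hx h1, h2 (hVy0 n (msel n))]
    exact himg.of_finite_image (hWselinj.mono fun n hn => hn.1)
  -- the final selection
  set Fsel : ℕ → Set (Set ↥X) := fun n => if n ∈ Ns then Gf n (msel n) else ∅ with hFsel
  set G : ℕ → Set ↥X := fun n => ⋃₀ Fsel n with hG
  have hGeq : ∀ n ∈ Ns, G n = ⋃₀ Gf n (msel n) := by
    intro n hn
    simp only [hG, hFsel, if_pos hn]
  have hGempty : ∀ n ∉ Ns, G n = ∅ := by
    intro n hn
    simp only [hG, hFsel, if_neg hn, Set.sUnion_empty]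
  have hGV : ∀ n, n ∈ Ns → V n (msel n) ⊆ G n := by
    intro n hn
    rw [hGeq n hn]
    exact hVsub n (msel n)
  have hGne : ∀ n, G n ≠ Set.univ := by
    intro n
    by_cases hn : n ∈ Ns
    · rw [hGeq n hn]; exact hGfne n _
    · rw [hGempty n hn]
      intro hcon
      have : (y₀ : ↥X) ∈ (∅ : Set ↥X) := by rw [hcon]; trivial
      exact absurd this (Set.notMem_empty y₀)
  have hbadsub : ∀ x : ↥X, {S | S ∈ Set.range G ∧ x ∉ S}
      ⊆ insert ∅ (G '' {n | n ∈ Ns ∧ x ∉ V n (msel n)}) := by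
    rintro x S ⟨⟨n, rfl⟩, hxS⟩
    by_cases hn : n ∈ Ns
    · exact Set.mem_insert_of_mem _ ⟨n, ⟨hn, fun hc => hxS (hGV n hn hc)⟩, rfl⟩
    · rw [hGempty n hn]
      exact Set.mem_insert _ _
  have hγ : ∀ x : ↥X, {S | S ∈ Set.range G ∧ x ∉ S}.Finite := fun x =>
    ((((hJ x).image G).insert ∅).subset (hbadsub x))
  have hcovx : ∀ x : ↥X, ∃ n ∈ Ns, x ∈ V n (msel n) := by
    intro x
    obtain ⟨n, hn⟩ := (hNsinf.diff (hJ x)).nonempty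
    refine ⟨n, hn.1, ?_⟩
    by_contra hcon
    exact hn.2 ⟨hn.1, hcon⟩
  refine ⟨Fsel, fun n => ?_, ?_⟩
  · by_cases hn : n ∈ Ns
    · simp only [hFsel, if_pos hn]
      exact ⟨hGfFin n _, hGfsub n _⟩
    · simp only [hFsel, if_neg hn]
      exact ⟨Set.finite_empty, Set.empty_subset _⟩
  · show OGamma ↥X (Set.range G)
    constructor
    · refine ⟨⟨Set.countable_range G, ?_, ?_⟩, ?_, hγ⟩
      · apply Set.eq_univ_of_forall
        intro x
        obtain ⟨n, hn, hx⟩ := hcovx x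
        exact ⟨G n, ⟨n, rfl⟩, hGV n hn hx⟩
      · rintro ⟨n, hn⟩
        exact hGne n hn
      · intro hfin
        have hfib : ∃ S ∈ Set.range G, {n | n ∈ Ns ∧ G n = S}.Infinite := by
          by_contra hcon
          push_neg at hcon
          apply hNsinf
          have hsub : Ns ⊆ ⋃ S ∈ Set.range G, {n | n ∈ Ns ∧ G n = S} := fun n hn =>
            Set.mem_biUnion ⟨n, rfl⟩ ⟨hn, rfl⟩
          exact (hfin.biUnion fun S hS => (hcon S hS)).subset hsub
        obtain ⟨S, hSmem, hSinf⟩ := hfib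
        obtain ⟨n₀, hn₀⟩ := hSinf.nonempty
        obtain ⟨x, hx⟩ := (Set.ne_univ_iff_exists_notMem S).mp (hn₀.2 ▸ hGne n₀)
        apply Set.not_infinite.mpr (hJ x)
        apply hSinf.mono
        intro n hn
        refine ⟨hn.1, fun hc => hx ?_⟩
        rw [← hn.2]
        exact hGV n hn.1 hc
    · rintro S ⟨n, rfl⟩
      by_cases hn : n ∈ Ns
      · rw [hGeq n hn]
        exact isOpen_sUnion fun t ht => (hU n).2 t (hGfsub n _ ht)
      · rw [hGempty n hn]
        exact isOpen_empty

end
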